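/- Correctness of compilation, pattern matches: let m = (case d of {C_1 v⃗ → e_1; …; C_c v⃗ → e_c}) be a complete pattern match on a discriminant d of a type T with c constructors, where d and each branch body e_1,…,e_c are compiled correctly. Then m is compiled correctly, i.e. for every abstract environment e and assignment σ, decode(avalue(e, compile(m)), σ) = cvalue(decode(e,σ), m). -/

import Mathlib

/-- Abstract values over propositional variables `V`: a list of (semantic) formulas
(the *flags*) together with a list of abstract values (the *arguments*). -/
inductive AVal (V : Type) : Type where
  | mk : List ((V → Bool) → Bool) → List (AVal V) → AVal V

/-- The flags of an abstract value. -/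
def AVal.flags {V : Type} : AVal V → List ((V → Bool) → Bool)
  | .mk f _ => f

/-- The arguments of an abstract value. -/
def AVal.args {V : Type} : AVal V → List (AVal V)
  | .mk _ a => a

/-- A signature: every type symbol `T` gets a nonempty finite list of constructors,
each given by its finite list of argument type symbols. -/
structure Signature (τ : Type) where
  ctors : τ → List (List τ)
  ctors_ne : ∀ T, ctors T ≠ []

/-- Untyped data terms; the first component is the (1-based) rank of the
constructor. -/
inductive Value : Type where
  | mk : ℕ → List Value → Value

/-- Well-typed concrete values of type `T`: `C_i(v_1, …, v_n)` where `C_i` is the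
`i`-th constructor of `T` with argument types `T_1, …, T_n` and each `v_j` is a
well-typed value of type `T_j`. -/
inductive WT {τ : Type} (sig : Signature τ) : τ → Value → Prop where
  | mk {T : τ} {i : ℕ} {argTys : List τ} {vals : List Value} :
      1 ≤ i → (sig.ctors T)[i - 1]? = some argTys →
      List.Forall₂ (WT sig) argTys vals → WT sig T (.mk i vals)

/-- `numeric n w = some i` iff `w` has a (unique) prefix `u ∈ S n` of lexicographic
rank `i` in `S n`; extra bits beyond the prefix are ignored. -/
def numeric : ℕ → List Bool → Option ℕ
  | 0, _ => none
  | 1, _ => some 1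
  | _ + 2, [] => none
  | n + 2, false :: w => numeric ((n + 2 + 1) / 2) w
  | n + 2, true :: w => (numeric ((n + 2) / 2) w).map (fun i => (n + 2 + 1) / 2 + i)
termination_by n _ => n
decreasing_by all_goals omega

/-- `strOf n i` is the element of `S n` of lexicographic rank `i` (for `1 ≤ i ≤ n`). -/
def strOf : ℕ → ℕ → List Bool
  | 0, _ => []
  | 1, _ => []
  | n + 2, i =>
      if i ≤ (n + 2 + 1) / 2 then false :: strOf ((n + 2 + 1) / 2) i
      else true :: strOf ((n + 2) / 2) (i - (n + 2 + 1) / 2)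
termination_by n _ => n
decreasing_by all_goals omega
mutual
  /-- Encoding of a concrete value of type `T` as an abstract value: the flags are
  constant formulas representing the rank-`i` element of `S c(T)`, and the arguments
  are the encodings of the constructor arguments at their respective types. -/
  def encode {V τ : Type} (sig : Signature τ) : τ → Value → AVal V
    | T, .mk i vals =>
        .mk ((strOf (sig.ctors T).length i).map (fun b => fun _ => b))
          (encodeList sig ((sig.ctors T).getD (i - 1) []) vals)
  termination_by _ v => sizeOf v

  /-- Pointwise encoding of a list of values at a list of types. -/
  def encodeList {V τ : Type} (sig : Signature τ) : List τ → List Value → List (AVal V)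
    | t :: ts, v :: vs => encode sig t v :: encodeList sig ts vs
    | _, _ => []
  termination_by _ vs => sizeOf vs
end

mutual
  /-- Decoding of an abstract value at type `T` under an assignment `σ` (a partial
  function): the flags are evaluated under `σ`; if the resulting bit string has a
  prefix in `S c(T)` determining constructor rank `i` of `T`, and there are enough
  arguments, the first arguments are decoded at the argument types of the `i`-th
  constructor of `T`; otherwise decoding is undefined. -/
  def decode {V τ : Type} (sig : Signature τ) : τ → AVal V → (V → Bool) → Option Value
    | T, .mk flags args, σ =>
        match numeric (sig.ctors T).length (flags.map (fun f => f σ)) with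
        | none => none
        | some i =>
            match (sig.ctors T)[i - 1]? with
            | none => none
            | some argTys =>
                if argTys.length ≤ args.length then
                  (decodeList sig argTys args σ).map (Value.mk i)
                else none
  termination_by _ a _ => sizeOf a

  /-- Pointwise decoding of (a prefix of) a list of abstract values at a list of
  types. -/
  def decodeList {V τ : Type} (sig : Signature τ) :
      List τ → List (AVal V) → (V → Bool) → Option (List Value)
    | [], _, _ => some []
    | _ :: _, [], _ => none
    | t :: ts, a :: as, σ =>
        match decode sig t a σ with
        | none => none
        | some v => (decodeList sig ts as σ).map (fun vs => v :: vs)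
  termination_by _ as _ => sizeOf as
end
lemma AVal.one_le_sizeOf_list {V : Type} (l : List (AVal V)) : 1 ≤ sizeOf l := by
  cases l <;> simp <;> omega

lemma AVal.sizeOf_getD_le {V : Type} (a : AVal V) (j : ℕ) :
    sizeOf (a.args.getD j (AVal.mk [] [])) ≤ sizeOf a := by
  cases a with
  | mk f args =>
      simp only [AVal.args]
      by_cases h : j < args.length
      · have hm : args.getD j (AVal.mk [] []) ∈ args := by
          rw [List.getD_eq_getElem _ _ h]; exact List.getElem_mem h
        have := List.sizeOf_lt_of_mem hm
        simp only [AVal.mk.sizeOf_spec]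
        have := AVal.one_le_sizeOf_list (V := V) []
        omega
      · rw [List.getD_eq_default _ _ (by omega)]
        simp only [AVal.mk.sizeOf_spec]
        have h1 : 1 ≤ sizeOf f := by cases f <;> simp <;> omega
        have h2 := AVal.one_le_sizeOf_list args
        have h3 := AVal.one_le_sizeOf_list (V := V) []
        simp at h3 ⊢
        omega

lemma AVal.sizeOf_getD_lt {V : Type} (a : AVal V) (j : ℕ) (h : j < a.args.length) :
    sizeOf (a.args.getD j (AVal.mk [] [])) < sizeOf a := by
  cases a with
  | mk f args =>
      simp only [AVal.args] at h ⊢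
      have hm : args.getD j (AVal.mk [] []) ∈ args := by
        rw [List.getD_eq_getElem _ _ h]; exact List.getElem_mem h
      have := List.sizeOf_lt_of_mem hm
      simp only [AVal.mk.sizeOf_spec]
      omega

lemma merge_dec {V : Type} (as : List (AVal V)) (j : ℕ)
    (hj : j < (as.map (fun a => a.args.length)).foldr max 0) :
    sizeOf (as.map (fun a => a.args.getD j (AVal.mk [] []))) < sizeOf as := by
  induction as with
  | nil => simp at hj
  | cons a as ih =>
      simp only [List.map_cons, List.foldr_cons] at hj
      simp only [List.map_cons, List.cons.sizeOf_spec]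
      rcases Nat.lt_or_ge j a.args.length with h | h
      · have h1 := AVal.sizeOf_getD_lt a j h
        have h2 : sizeOf (as.map (fun a => a.args.getD j (AVal.mk [] []))) ≤ sizeOf as := by
          rcases Nat.lt_or_ge j ((as.map (fun a => a.args.length)).foldr max 0) with h' | h'
          · exact Nat.le_of_lt (ih h')
          · clear ih hj; induction as with
            | nil => simp
            | cons b bs ihb =>
                simp only [List.map_cons, List.foldr_cons] at h' ⊢
                simp only [List.cons.sizeOf_spec]
                have := AVal.sizeOf_getD_le b j
                have := ihb (by omega)
                omega
        omega
      · have hj' : j < (as.map (fun a => a.args.length)).foldr max 0 := by omega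
        have := ih hj'
        have := AVal.sizeOf_getD_le a j
        omega

/-- The combining function `merge c f⃗ [a_1, …, a_c]`: its `i`-th flag is the
conjunction over `k` of the implications `numeric c f⃗ = k ⟹ flags_i(a_k)`, and its
`j`-th argument is `merge c f⃗` of the `j`-th arguments of the `a_k` (a missing
argument being the empty abstract value). -/
def merge {V : Type} (c : ℕ) (fs : List ((V → Bool) → Bool)) (as : List (AVal V)) :
    AVal V :=
  AVal.mk
    ((List.range ((as.map (fun a => a.flags.length)).foldr max 0)).map
      (fun i => fun σ =>
        match numeric c (fs.map (fun f => f σ)) with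
        | none => true
        | some k =>
            match as[k - 1]? with
            | none => true
            | some a =>
                match a.flags[i]? with
                | none => true
                | some g => g σ))
    ((List.range ((as.map (fun a => a.args.length)).foldr max 0)).attach.map
      (fun j => merge c fs (as.map (fun a => a.args.getD j.1 (AVal.mk [] [])))))
termination_by sizeOf as
decreasing_by
  simpa [List.map_attach_eq_pmap, List.pmap_eq_map] using merge_dec as j.1 (by simpa using j.2)

/-- Expressions of the input language: variables, local bindings, calls of globally
defined functions, constructor applications (the constructor given by its type symbol
and its 1-based rank), and complete pattern matches (one branch, consisting of the
pattern variables and the branch body, per constructor of the discriminant's type). -/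
inductive Expr (τ Name FName : Type) : Type where
  | var : Name → Expr τ Name FName
  | lett : Name → Expr τ Name FName → Expr τ Name FName → Expr τ Name FName
  | call : FName → List (Expr τ Name FName) → Expr τ Name FName
  | con : τ → ℕ → List (Expr τ Name FName) → Expr τ Name FName
  | cases : τ → Expr τ Name FName → List (List Name × Expr τ Name FName) →
      Expr τ Name FName

/-- Expressions of the abstract (compiled) language: variables, local bindings,
calls, abstract constructor applications `C'` (given the number `c` of constructors
of the type and the rank `i` of the constructor), and the compiled form of pattern
matches: `amerge c d bs` evaluates `d` to an abstract value `x`, evaluates each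
branch body with the pattern variables bound to the arguments of `x`, and merges the
results according to the flags of `x`. -/
inductive AExpr (Name FName V : Type) : Type where
  | var : Name → AExpr Name FName V
  | lett : Name → AExpr Name FName V → AExpr Name FName V → AExpr Name FName V
  | call : FName → List (AExpr Name FName V) → AExpr Name FName V
  | mkCon : ℕ → ℕ → List (AExpr Name FName V) → AExpr Name FName V
  | amerge : ℕ → AExpr Name FName V → List (List Name × AExpr Name FName V) →
      AExpr Name FName V

lemma sizeOf_snd_lt_of_mem {Name E : Type} [SizeOf Name] [SizeOf E]
    {bs : List (List Name × E)} {b : List Name × E} (h : b ∈ bs) :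
    sizeOf b.2 < sizeOf bs := by
  have h1 := List.sizeOf_lt_of_mem h
  obtain ⟨vs, body⟩ := b
  simp at h1 ⊢
  omega

/-- Compilation of input expressions to abstract expressions. -/
def compile {τ Name FName V : Type} (sig : Signature τ) :
    Expr τ Name FName → AExpr Name FName V
  | .var x => .var x
  | .lett x a b => .lett x (compile sig a) (compile sig b)
  | .call f as => .call f (as.attach.map (fun e => compile sig e.1))
  | .con T i as => .mkCon (sig.ctors T).length i (as.attach.map (fun e => compile sig e.1))
  | .cases T d bs =>
      .amerge (sig.ctors T).length (compile sig d)
        (bs.attach.map (fun b => (b.1.1, compile sig b.1.2)))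
termination_by e => sizeOf e
decreasing_by
  all_goals simp only [Expr.lett.sizeOf_spec, Expr.call.sizeOf_spec,
    Expr.con.sizeOf_spec, Expr.cases.sizeOf_spec]
  · omega
  · omega
  · have h := List.sizeOf_lt_of_mem e.2; omega
  · have h := List.sizeOf_lt_of_mem e.2; omega
  · omega
  · have h := sizeOf_snd_lt_of_mem b.2; omega

/-- `updEnv env x v` updates the environment `env` at `x` by `v`. -/
def updEnv {Name β : Type} [DecidableEq Name] (env : Name → Option β) (x : Name)
    (v : β) : Name → Option β :=
  fun y => if y = x then some v else env y

/-- The environment binding a list of names pointwise to a list of values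
(and nothing else). -/
def bindEnv {Name β : Type} [DecidableEq Name] : List Name → List β → Name → Option β
  | p :: ps, v :: vs, y => if y = p then some v else bindEnv ps vs y
  | _, _, _ => none

/-- `extEnv vs ws env` extends `env` by binding the names `vs` pointwise
to the values `ws`. -/
def extEnv {Name β : Type} [DecidableEq Name] (vs : List Name) (ws : List β)
    (env : Name → Option β) : Name → Option β :=
  fun y => match bindEnv vs ws y with
    | some v => some v
    | none => env y

/- Strict (call-by-value) big-step evaluation of input expressions with respect to a
program `prog` assigning to (some) function names their formal parameters and body.
In a pattern match, the branch corresponding to the constructor of the discriminant's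
value is chosen, with the pattern variables bound to the constructor arguments.
`CEvalList` is the pointwise lifting of `CEval` to lists of expressions. -/
mutual
  /-- Big-step evaluation of input expressions. -/
  inductive CEval {τ Name FName : Type} [DecidableEq Name]
      (prog : FName → Option (List Name × Expr τ Name FName)) :
      (Name → Option Value) → Expr τ Name FName → Value → Prop where
    | var {env x v} : env x = some v → CEval prog env (.var x) v
    | lett {env x a b u v} : CEval prog env a u →
        CEval prog (updEnv env x u) b v → CEval prog env (.lett x a b) v
    | call {env f args params body vals v} : prog f = some (params, body) →
        CEvalList prog env args vals →
        CEval prog (bindEnv params vals) body v →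
        CEval prog env (.call f args) v
    | con {env T i args vals} : CEvalList prog env args vals →
        CEval prog env (.con T i args) (.mk i vals)
    | cases {env T d bs i ws pvs body v} : CEval prog env d (.mk i ws) →
        bs[i - 1]? = some (pvs, body) →
        CEval prog (extEnv pvs ws env) body v →
        CEval prog env (.cases T d bs) v

  /-- Pointwise lifting of `CEval` to lists. -/
  inductive CEvalList {τ Name FName : Type} [DecidableEq Name]
      (prog : FName → Option (List Name × Expr τ Name FName)) :
      (Name → Option Value) → List (Expr τ Name FName) → List Value → Prop where
    | nil {env} : CEvalList prog env [] []
    | cons {env e v es vs} : CEval prog env e v → CEvalList prog env es vs →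
        CEvalList prog env (e :: es) (v :: vs)
end

/- Strict big-step evaluation of abstract expressions with respect to an abstract
program `aprog`.  An abstract constructor application `C'` builds the abstract value
with the constant flags representing the rank-`i` element of `S c` and the values of
the arguments; `amerge` evaluates the discriminant to `x`, each branch body with the
pattern variables bound to the arguments of `x` (a missing argument being the empty
abstract value), and merges the branch results according to the flags of `x`.
`AEvalList` is the pointwise lifting of `AEval` to lists, and
`AEvalBranches aprog env x bs rs` evaluates the branch bodies `bs` (each with its
pattern variables bound to the arguments of `x`) to the abstract values `rs`. -/
mutual
  /-- Big-step evaluation of abstract expressions. -/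
  inductive AEval {Name FName V : Type} [DecidableEq Name]
      (aprog : FName → Option (List Name × AExpr Name FName V)) :
      (Name → Option (AVal V)) → AExpr Name FName V → AVal V → Prop where
    | var {env x a} : env x = some a → AEval aprog env (.var x) a
    | lett {env x a b u w} : AEval aprog env a u →
        AEval aprog (updEnv env x u) b w → AEval aprog env (.lett x a b) w
    | call {env f args params body avals w} : aprog f = some (params, body) →
        AEvalList aprog env args avals →
        AEval aprog (bindEnv params avals) body w →
        AEval aprog env (.call f args) w
    | mkCon {env c i args avals} : AEvalList aprog env args avals →
        AEval aprog env (.mkCon c i args)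
          (.mk ((strOf c i).map (fun b => fun _ => b)) avals)
    | amerge {env c d bs x rs} : AEval aprog env d x →
        AEvalBranches aprog env x bs rs →
        AEval aprog env (.amerge c d bs) (merge c x.flags rs)

  /-- Pointwise lifting of `AEval` to lists. -/
  inductive AEvalList {Name FName V : Type} [DecidableEq Name]
      (aprog : FName → Option (List Name × AExpr Name FName V)) :
      (Name → Option (AVal V)) → List (AExpr Name FName V) → List (AVal V) → Prop where
    | nil {env} : AEvalList aprog env [] []
    | cons {env e a es as} : AEval aprog env e a → AEvalList aprog env es as →
        AEvalList aprog env (e :: es) (a :: as)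

  /-- Evaluation of the branches of a compiled pattern match. -/
  inductive AEvalBranches {Name FName V : Type} [DecidableEq Name]
      (aprog : FName → Option (List Name × AExpr Name FName V)) :
      (Name → Option (AVal V)) → AVal V → List (List Name × AExpr Name FName V) →
      List (AVal V) → Prop where
    | nil {env x} : AEvalBranches aprog env x [] []
    | cons {env x pvs body r bs rs} :
        AEval aprog
          (extEnv pvs
            ((List.range pvs.length).map (fun j => x.args.getD j (AVal.mk [] [])))
            env)
          body r →
        AEvalBranches aprog env x bs rs →
        AEvalBranches aprog env x ((pvs, body) :: bs) (r :: rs)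
end

/-- Pointwise decoding of an abstract environment under a typing environment `Γ` and
an assignment `σ`. -/
def decodeEnv {τ Name V : Type} (sig : Signature τ) (Γ : Name → Option τ)
    (env : Name → Option (AVal V)) (σ : V → Bool) : Name → Option Value :=
  fun y => match Γ y, env y with
    | some T, some a => decode sig T a σ
    | _, _ => none

/-- An input expression `p` of type `T` (its free variables typed by `Γ`) is
*compiled correctly* if for every abstract environment, every assignment `σ`, every
result `a` of abstract evaluation of `compile p` and every result `v` of concrete
evaluation of `p` in the decoded environment, decoding `a` at `T` under `σ` is
defined and yields `v` — i.e. `decode (avalue (e, compile p), σ) = cvalue (decode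
(e, σ), p)`. -/
def CompiledCorrectly {τ Name FName V : Type} [DecidableEq Name]
    (sig : Signature τ) (prog : FName → Option (List Name × Expr τ Name FName))
    (aprog : FName → Option (List Name × AExpr Name FName V))
    (Γ : Name → Option τ) (p : Expr τ Name FName) (T : τ) : Prop :=
  ∀ (env : Name → Option (AVal V)) (σ : V → Bool) (a : AVal V) (v : Value),
    AEval aprog env (compile sig p) a →
    CEval prog (decodeEnv sig Γ env σ) p v →
    decode sig T a σ = some v

lemma aux_numeric_append (n : ℕ) : ∀ (w : List Bool) (i : ℕ), numeric n w = some i →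
    ∀ w', numeric n (w ++ w') = some i := by
  induction n using Nat.strong_induction_on with
  | _ n ih =>
    rcases n with _ | _ | m
    · intro w i h; simp [numeric] at h
    · intro w i h w'; simp [numeric] at h ⊢; omega
    · intro w i h w'
      rcases w with _ | ⟨b, w⟩
      · simp [numeric] at h
      · cases b
        · have e1 : numeric (m+2) (false :: w) = numeric ((m+2+1)/2) w := by simp [numeric]
          have e2 : numeric (m+2) ((false :: w) ++ w') = numeric ((m+2+1)/2) (w ++ w') := by
            simp [numeric]
          rw [e1] at h; rw [e2]
          exact ih _ (by omega) _ _ h _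
        · have e1 : numeric (m+2) (true :: w)
              = (numeric ((m+2)/2) w).map (fun i => (m+2+1)/2 + i) := by simp [numeric]
          have e2 : numeric (m+2) ((true :: w) ++ w')
              = (numeric ((m+2)/2) (w ++ w')).map (fun i => (m+2+1)/2 + i) := by simp [numeric]
          rw [e1, Option.map_eq_some_iff] at h
          obtain ⟨j, hj, rfl⟩ := h
          rw [e2, ih _ (by omega) _ _ hj w']
          rfl

lemma aux_pad (w : List Bool) (M : ℕ) (h : w.length ≤ M) :
    (List.range M).map (fun j => (w[j]?.getD true))
      = w ++ List.replicate (M - w.length) true := by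
  apply List.ext_getElem?
  intro j
  by_cases hj : j < M
  · rw [List.getElem?_map, List.getElem?_range hj, List.getElem?_append]
    by_cases hjw : j < w.length
    · simp [hjw, List.getElem?_eq_getElem hjw]
    · simp only [hjw, if_false, List.getElem?_replicate, Option.map_some]
      rw [List.getElem?_eq_none (le_of_not_gt hjw)]
      simp
      omega
  · rw [List.getElem?_eq_none (by simp; omega), List.getElem?_eq_none (by simp; omega)]

lemma aux_le_foldr_max {α : Type} (f : α → ℕ) : ∀ (l : List α) (x : α), x ∈ l →
    f x ≤ (l.map f).foldr max 0 := by
  intro l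
  induction l with
  | nil => simp
  | cons a l ih =>
    intro x hx
    simp only [List.map_cons, List.foldr_cons]
    rcases List.mem_cons.mp hx with rfl | hx
    · exact le_max_left _ _
    · exact le_trans (ih x hx) (le_max_right _ _)

lemma aux_merge_eq {V : Type} (c : ℕ) (fs : List ((V → Bool) → Bool)) (rs : List (AVal V)) :
    merge c fs rs = AVal.mk
      ((List.range ((rs.map (fun a => a.flags.length)).foldr max 0)).map
        (fun i => fun σ =>
          match numeric c (fs.map (fun f => f σ)) with
          | none => true
          | some k =>
              match rs[k - 1]? with
              | none => true
              | some a =>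
                  match a.flags[i]? with
                  | none => true
                  | some g => g σ))
      ((List.range ((rs.map (fun a => a.args.length)).foldr max 0)).map
        (fun j => merge c fs (rs.map (fun a => a.args.getD j (AVal.mk [] []))))) := by
  rw [merge.eq_def]
  congr 1
  exact List.attach_map_val (f := fun j => merge c fs (rs.map (fun a => a.args.getD j (AVal.mk [] []))))

lemma aux_decodeList_spec {V τ : Type} (sig : Signature τ) (σ : V → Bool) :
    ∀ (ts : List τ) (as' : List (AVal V)) (ws : List Value),
      decodeList sig ts as' σ = some ws →
      ws.length = ts.length ∧ ts.length ≤ as'.length ∧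
      ∀ j t w, ts[j]? = some t → ws[j]? = some w →
        decode sig t (as'.getD j (AVal.mk [] [])) σ = some w := by
  intro ts
  induction ts with
  | nil =>
    intro as' ws h
    rw [decodeList] at h
    refine ⟨?_, by simp, ?_⟩
    · simp at h; subst h; rfl
    · intro j t w ht; simp at ht
  | cons t ts ih =>
    intro as' ws h
    rcases as' with _ | ⟨a, as'⟩
    · rw [decodeList] at h; simp at h
    · rw [decodeList] at h
      rcases hd : decode sig t a σ with _ | v
      · rw [hd] at h; simp at h
      · rw [hd, Option.map_eq_some_iff] at h
        obtain ⟨ws0, hws0, rfl⟩ := h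
        obtain ⟨l1, l2, l3⟩ := ih as' ws0 hws0
        refine ⟨by simp [l1], by simp; omega, ?_⟩
        intro j t' w ht hw
        cases j with
        | zero =>
          simp at ht hw
          subst ht; subst hw
          simpa using hd
        | succ j =>
          simp at ht hw
          simpa using l3 j t' w ht hw

lemma aux_branches_spec {Name FName V : Type} [DecidableEq Name]
    (aprog : FName → Option (List Name × AExpr Name FName V))
    (env : Name → Option (AVal V)) (x : AVal V) :
    ∀ (bl : List (List Name × AExpr Name FName V)) (rs : List (AVal V)),
      AEvalBranches aprog env x bl rs →
      bl.length = rs.length ∧ ∀ (j : ℕ) pvs body r, bl[j]? = some (pvs, body) → rs[j]? = some r →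
        AEval aprog
          (extEnv pvs
            ((List.range pvs.length).map (fun j => x.args.getD j (AVal.mk [] []))) env)
          body r := by
  intro bl
  induction bl with
  | nil =>
    intro rs h
    cases h
    exact ⟨rfl, by simp⟩
  | cons b bl ih =>
    intro rs h
    obtain ⟨pvs0, body0⟩ := b
    cases h with
    | cons h1 h2 =>
      obtain ⟨l1, l2⟩ := ih _ h2
      refine ⟨by simp [l1], ?_⟩
      intro j pvs body r hb hr
      cases j with
      | zero =>
        simp at hb hr
        obtain ⟨rfl, rfl⟩ := hb
        subst hr
        exact h1
      | succ j =>
        simp at hb hr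
        exact l2 j pvs body r hb hr

lemma aux_env {τ Name V : Type} [DecidableEq Name] (sig : Signature τ) (σ : V → Bool)
    (Γ : Name → Option τ) (env : Name → Option (AVal V)) :
    ∀ (pvs : List Name) (ts : List τ) (avs : List (AVal V)) (ws : List Value),
      pvs.length = ts.length → ts.length = avs.length → avs.length = ws.length →
      (∀ (j : ℕ) t a w, ts[j]? = some t → avs[j]? = some a → ws[j]? = some w →
        decode sig t a σ = some w) →
      decodeEnv sig (extEnv pvs ts Γ) (extEnv pvs avs env) σ =
        extEnv pvs ws (decodeEnv sig Γ env σ) := by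
  intro pvs
  induction pvs with
  | nil =>
    intro ts avs ws h1 h2 h3 hdec
    rcases ts with _ | _
    · rcases avs with _ | _
      · rcases ws with _ | _
        · funext y
          simp [decodeEnv, extEnv, bindEnv]
        · simp at h3
      · simp at h2
    · simp at h1
  | cons p pvs ih =>
    intro ts avs ws h1 h2 h3 hdec
    rcases ts with _ | ⟨t, ts⟩
    · simp at h1
    rcases avs with _ | ⟨a, avs⟩
    · simp at h2
    rcases ws with _ | ⟨w, ws⟩
    · simp at h3
    have hrec := ih ts avs ws (by simpa using h1) (by simpa using h2) (by simpa using h3)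
      (fun j t' a' w' ht ha hw =>
        hdec (j+1) t' a' w' (by simpa using ht) (by simpa using ha) (by simpa using hw))
    funext y
    by_cases hy : y = p
    · subst hy
      have h0 := hdec 0 t a w (by simp) (by simp) (by simp)
      simp [decodeEnv, extEnv, bindEnv, h0]
    · have hy2 := congrFun hrec y
      simp only [decodeEnv, extEnv, bindEnv, if_neg hy] at hy2 ⊢
      exact hy2

lemma aux_decode_merge {V τ : Type} (sig : Signature τ) (σ : V → Bool) (c : ℕ)
    (fs : List ((V → Bool) → Bool)) :
    ∀ (rs : List (AVal V)) (k : ℕ) (r : AVal V),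
      numeric c (fs.map (fun f => f σ)) = some k → rs[k - 1]? = some r →
      ∀ (U : τ) (v : Value), decode sig U r σ = some v →
        decode sig U (merge c fs rs) σ = some v := by
  suffices H : ∀ (N : ℕ) (rs : List (AVal V)), sizeOf rs < N → ∀ (k : ℕ) (r : AVal V),
      numeric c (fs.map (fun f => f σ)) = some k → rs[k - 1]? = some r →
      ∀ (U : τ) (v : Value), decode sig U r σ = some v →
        decode sig U (merge c fs rs) σ = some v by
    intro rs
    exact H (sizeOf rs + 1) rs (by omega)
  intro N
  induction N with
  | zero => intro rs h; omega
  | succ N ih =>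
    intro rs hN k r hk hr U v hdec
    obtain ⟨rf, ra⟩ := r
    set Mf := (rs.map (fun a => a.flags.length)).foldr max 0 with hMfdef
    set Ma := (rs.map (fun a => a.args.length)).foldr max 0 with hMadef
    have hmem : AVal.mk rf ra ∈ rs := List.mem_of_getElem? hr
    have hMf : rf.length ≤ Mf := by
      exact aux_le_foldr_max (fun a => a.flags.length) rs _ hmem
    have hMa : ra.length ≤ Ma := by
      exact aux_le_foldr_max (fun a => a.args.length) rs _ hmem
    rw [decode] at hdec
    split at hdec
    · exact absurd hdec (by simp)
    next i hnum =>
    split at hdec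
    · exact absurd hdec (by simp)
    next ts hts =>
    split at hdec
    case isFalse => exact absurd hdec (by simp)
    case isTrue hle =>
    rw [Option.map_eq_some_iff] at hdec
    obtain ⟨ws', hdl, rfl⟩ := hdec
    -- flags computation
    have hfl : ((List.range Mf).map
        (fun i => fun σ' =>
          match numeric c (fs.map (fun f => f σ')) with
          | none => true
          | some k =>
              match rs[k - 1]? with
              | none => true
              | some a =>
                  match a.flags[i]? with
                  | none => true
                  | some g => g σ')).map (fun f => f σ)
        = (rf.map (fun f => f σ)) ++ List.replicate (Mf - rf.length) true := by
      rw [List.map_map]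
      have step1 : (List.range Mf).map
          ((fun f => f σ) ∘ (fun i => fun σ' =>
            match numeric c (fs.map (fun f => f σ')) with
            | none => true
            | some k =>
                match rs[k - 1]? with
                | none => true
                | some a =>
                    match a.flags[i]? with
                    | none => true
                    | some g => g σ'))
          = (List.range Mf).map (fun j => ((rf.map (fun f => f σ))[j]?).getD true) := by
        apply List.map_congr_left
        intro idx _
        simp only [Function.comp, hk, hr, AVal.flags, List.getElem?_map]
        cases hi : rf[idx]? <;> simp
      rw [step1]
      have := aux_pad (rf.map (fun f => f σ)) Mf (by simpa using hMf)
      simpa using this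
    rw [aux_merge_eq, decode]
    rw [← hMfdef, ← hMadef]
    rw [hfl, aux_numeric_append _ _ _ hnum _]
    simp only [hts, List.length_map, List.length_range]
    rw [if_pos (le_trans hle hMa)]
    -- arguments computation
    have Q : ∀ (ts' : List τ) (n : ℕ) (ws'' : List Value), n + ts'.length ≤ ra.length →
        decodeList sig ts' (ra.drop n) σ = some ws'' →
        decodeList sig ts'
          (((List.range Ma).map
            (fun j => merge c fs (rs.map (fun a => a.args.getD j (AVal.mk [] []))))).drop n) σ
          = some ws'' := by
      intro ts'
      induction ts' with
      | nil =>
        intro n ws'' _ h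
        rw [decodeList] at h ⊢
        exact h
      | cons t' ts' ihq =>
        intro n ws'' hlen h
        simp only [List.length_cons] at hlen
        have hn : n < ra.length := by omega
        rw [List.drop_eq_getElem_cons hn, decodeList] at h
        rcases hv0 : decode sig t' ra[n] σ with _ | v0
        · rw [hv0] at h; simp at h
        · rw [hv0, Option.map_eq_some_iff] at h
          obtain ⟨ws0, hws0, rfl⟩ := h
          have hnM : n < Ma := lt_of_lt_of_le hn hMa
          have hnL : n < ((List.range Ma).map
              (fun j => merge c fs (rs.map (fun a => a.args.getD j (AVal.mk [] []))))).length := by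
            simpa using hnM
          rw [List.drop_eq_getElem_cons hnL, decodeList]
          have hget : ((List.range Ma).map
              (fun j => merge c fs (rs.map (fun a => a.args.getD j (AVal.mk [] [])))))[n]
              = merge c fs (rs.map (fun a => a.args.getD n (AVal.mk [] []))) := by
            simp
          rw [hget]
          have hsz : sizeOf (rs.map (fun a => a.args.getD n (AVal.mk [] []))) < N := by
            have := merge_dec rs n (by simpa [hMadef] using hnM)
            omega
          have hmap : (rs.map (fun a => a.args.getD n (AVal.mk [] [])))[k - 1]?
              = some (ra.getD n (AVal.mk [] [])) := by
            rw [List.getElem?_map, hr]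
            simp [AVal.args]
          have hPm : decode sig t' (merge c fs (rs.map (fun a => a.args.getD n (AVal.mk [] [])))) σ
              = some v0 := by
            apply ih _ hsz k _ hk hmap
            rw [List.getD_eq_getElem _ _ hn]
            exact hv0
          rw [hPm]
          rw [ihq (n+1) ws0 (by omega) hws0]
          rfl
    have := Q ts 0 ws' (by simpa using hle) (by simpa using hdl)
    rw [List.drop_zero] at this
    rw [this]
    rfl

lemma aux_compile_cases {τ Name FName V : Type} (sig : Signature τ) (T : τ)
    (d : Expr τ Name FName) (bs : List (List Name × Expr τ Name FName)) :
    (compile sig (.cases T d bs) : AExpr Name FName V) =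
      .amerge (sig.ctors T).length (compile sig d)
        (bs.map (fun b => (b.1, compile sig b.2))) := by
  rw [compile]
  congr 1
  rw [show (fun (b : {x // x ∈ bs}) =>
      ((b : List Name × Expr τ Name FName).1, (compile sig b.1.2 : AExpr Name FName V)))
      = (fun b => ((fun x : List Name × Expr τ Name FName =>
        (x.1, (compile sig x.2 : AExpr Name FName V))) b.1)) from rfl]
  exact List.attach_map_val (l := bs) (f := fun x => (x.1, compile sig x.2))

/-- Correctness of compilation, pattern matches: let
`m = case d of {C_1 v⃗ → e_1; …; C_c v⃗ → e_c}` be a complete pattern match on a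
discriminant `d` of type `T` with `c` constructors, where `d` is compiled correctly
at `T` and each branch body is compiled correctly at the result type `U` under the
typing extended by the pattern variables at the argument types of the corresponding
constructor.  Then `m` is compiled correctly. -/
theorem compile_correct_cases {τ Name FName V : Type} [DecidableEq Name]
    (sig : Signature τ) (prog : FName → Option (List Name × Expr τ Name FName))
    (aprog : FName → Option (List Name × AExpr Name FName V))
    (haprog : ∀ f params body, prog f = some (params, body) →
      aprog f = some (params, compile sig body))
    (Γ : Name → Option τ) (T U : τ) (d : Expr τ Name FName)
    (bs : List (List Name × Expr τ Name FName))
    (hd : CompiledCorrectly sig prog aprog Γ d T)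
    (hlen : bs.length = (sig.ctors T).length)
    (harity : ∀ (k : ℕ) (argTys : List τ) (pvs : List Name)
      (body : Expr τ Name FName), (sig.ctors T)[k]? = some argTys →
      bs[k]? = some (pvs, body) → pvs.length = argTys.length)
    (hbodies : ∀ (k : ℕ) (argTys : List τ) (pvs : List Name)
      (body : Expr τ Name FName), (sig.ctors T)[k]? = some argTys →
      bs[k]? = some (pvs, body) →
      CompiledCorrectly sig prog aprog (extEnv pvs argTys Γ) body U) :
    CompiledCorrectly sig prog aprog Γ (.cases T d bs) U := by
  intro env σ a v hA hC
  rw [aux_compile_cases] at hA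
  cases hA with
  | amerge hx hbrs =>
    rename_i x rs
    cases hC with
    | cases hd' hb hbody =>
      rename_i i ws pvs body
      have hdx := hd env σ x (.mk i ws) hx hd'
      obtain ⟨xf, xa⟩ := x
      rw [decode] at hdx
      split at hdx
      · exact absurd hdx (by simp)
      next i' hnum =>
      split at hdx
      · exact absurd hdx (by simp)
      next argTys hcts =>
      split at hdx
      case isFalse => exact absurd hdx (by simp)
      case isTrue hle =>
      rw [Option.map_eq_some_iff] at hdx
      obtain ⟨ws0, hdl, heq⟩ := hdx
      injection heq with h1 h2
      subst h1; subst h2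
      -- branch data
      obtain ⟨lspec1, lspec2, lspec3⟩ := aux_decodeList_spec sig σ argTys xa ws0 hdl
      have hilt : i' - 1 < (sig.ctors T).length := by
        exact (List.getElem?_eq_some_iff.mp hcts).1
      have hbllen : (bs.map (fun b => (b.1, (compile sig b.2 : AExpr Name FName V)))).length
          = rs.length := (aux_branches_spec aprog env _ _ _ hbrs).1
      have hrslen : bs.length = rs.length := by simpa using hbllen
      have hrex : i' - 1 < rs.length := by omega
      have hr : rs[i'-1]? = some rs[i'-1] := List.getElem?_eq_getElem hrex
      have hbmap : (bs.map (fun b => (b.1, (compile sig b.2 : AExpr Name FName V))))[i'-1]?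
          = some (pvs, compile sig body) := by
        rw [List.getElem?_map, hb]
        rfl
      have habs := (aux_branches_spec aprog env _ _ _ hbrs).2 (i'-1) pvs (compile sig body)
        rs[i'-1] hbmap hr
      have hpl : pvs.length = argTys.length := harity (i'-1) argTys pvs body hcts hb
      -- environment equality
      set avs := (List.range pvs.length).map
        (fun j => (AVal.mk xf xa).args.getD j (AVal.mk [] [])) with havs
      have henv : decodeEnv sig (extEnv pvs argTys Γ) (extEnv pvs avs env) σ
          = extEnv pvs ws0 (decodeEnv sig Γ env σ) := by
        apply aux_env
        · exact hpl
        · simp [havs, hpl]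
        · simp [havs, hpl, lspec1]
        · intro j t a' w ht ha hw
          have hj : j < pvs.length := by
            obtain ⟨hj0, -⟩ := List.getElem?_eq_some_iff.mp ht
            omega
          rw [havs, List.getElem?_map, List.getElem?_range hj] at ha
          simp only [AVal.args, Option.map_some] at ha
          injection ha with ha
          subst ha
          exact lspec3 j t w ht hw
      have hbody' : CEval prog (decodeEnv sig (extEnv pvs argTys Γ) (extEnv pvs avs env) σ)
          body v := by rw [henv]; exact hbody
      have hdecU : decode sig U rs[i'-1] σ = some v :=
        hbodies (i'-1) argTys pvs body hcts hb (extEnv pvs avs env) σ rs[i'-1] v habs hbody'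
      simp only [AVal.flags]
      exact aux_decode_merge sig σ _ xf rs i' rs[i'-1] hnum hr U v hdecU
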